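/- Let f ∈ C^∞(ℝ^d) and suppose there exists C > 0 such that |x^β ∂^α f(x)| ≤ C^{|α|+|β|+1} M(α,β) for all α, β ∈ ℕ^d and x ∈ ℝ^d, where M(α,β) = (|α|!)^{1/2}·(max(|α|,|β|)!)^{1/2}. Then there exist constants C' > 0 and c > 0 such that |∂^α f(x)| ≤ C'^{|α|+1} α! ⟨x⟩^{−|α|} e^{−c|x|²} for all α ∈ ℕ^d and x ∈ ℝ^d. -/

import Mathlib

open scoped BigOperators
open MeasureTheory

noncomputable section

/-- ℝ^d with the Euclidean norm. -/
abbrev Rd (d : ℕ) := EuclideanSpace ℝ (Fin d)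
/-- ℂ^d with the Euclidean norm. -/
abbrev Cd (d : ℕ) := EuclideanSpace ℂ (Fin d)

/-- Partial derivative in direction `j`. -/
noncomputable def pd {d : ℕ} {F : Type*} [NormedAddCommGroup F] [NormedSpace ℝ F]
    (j : Fin d) (f : Rd d → F) : Rd d → F :=
  fun x => fderiv ℝ f x (EuclideanSpace.single j 1)

/-- Iterated multi-index partial derivative `∂^α`. -/
noncomputable def mderiv {d : ℕ} {F : Type*} [NormedAddCommGroup F] [NormedSpace ℝ F]
    (α : Fin d → ℕ) (f : Rd d → F) : Rd d → F :=
  (List.finRange d).foldr (fun j g => (pd j)^[α j] g) f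

/-- `|α| = α_1 + ⋯ + α_d`. -/
def msize {d : ℕ} (α : Fin d → ℕ) : ℕ := ∑ j, α j

/-- `α! = α_1! ⋯ α_d!`. -/
def mfact {d : ℕ} (α : Fin d → ℕ) : ℕ := ∏ j, Nat.factorial (α j)

/-- `x^β = x_1^{β_1} ⋯ x_d^{β_d}`. -/
noncomputable def mpow {d : ℕ} (x : Rd d) (β : Fin d → ℕ) : ℝ := ∏ j, (x j) ^ (β j)

/-- `M(α,β) = (|α|!)^{1/2} · (max(|α|,|β|)!)^{1/2}`. -/
noncomputable def Mab {d : ℕ} (α β : Fin d → ℕ) : ℝ :=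
  Real.sqrt (Nat.factorial (msize α)) * Real.sqrt (Nat.factorial (max (msize α) (msize β)))

/-- The Japanese bracket `⟨x⟩ = (1 + |x|²)^{1/2}`. -/
noncomputable def jap {d : ℕ} (x : Rd d) : ℝ := Real.sqrt (1 + ‖x‖^2)

/-- The function `x ↦ x^β ∂^α f(x)`. -/
noncomputable def wD {d : ℕ} (α β : Fin d → ℕ) (f : Rd d → ℂ) : Rd d → ℂ :=
  fun x => (mpow x β : ℂ) * mderiv α f x

/-- The `L²(ℝ^d)` norm. -/
noncomputable def L2norm {d : ℕ} (f : Rd d → ℂ) : ℝ := (eLpNorm f 2 volume).toReal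

/-- All pairs of multi-indices `(α, β)` with `|α| + |β| ≤ N`. -/
def mIdx (d N : ℕ) : Finset ((Fin d → ℕ) × (Fin d → ℕ)) :=
  ((Finset.Iic (fun _ => N : Fin d → ℕ)) ×ˢ (Finset.Iic (fun _ => N : Fin d → ℕ))).filter
    (fun p => msize p.1 + msize p.2 ≤ N)

/-- The `Q^s` norm: `‖f‖_{Q^s} = Σ_{|γ|+|δ| ≤ s} ‖x^δ ∂^γ f‖_{L²}`. -/
noncomputable def Qnorm (d s : ℕ) (f : Rd d → ℂ) : ℝ :=
  ∑ p ∈ mIdx d s, L2norm (wD p.1 p.2 f)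

/-- The partial sum `S_N^{s,ε}[u] = Σ_{|α|+|β| ≤ N} ε^{|α|+|β|} M(α,β)⁻¹ ‖x^β ∂^α u‖_{Q^s}`. -/
noncomputable def SN (d s : ℕ) (ε : ℝ) (N : ℕ) (u : Rd d → ℂ) : ℝ :=
  ∑ p ∈ mIdx d N, ε ^ (msize p.1 + msize p.2) / Mab p.1 p.2 * Qnorm d s (wD p.1 p.2 u)

/-- Real part of a point of ℂ^d. -/
noncomputable def rePart {d : ℕ} (z : Cd d) : Rd d := WithLp.toLp 2 (fun j => (z j).re)
/-- Imaginary part of a point of ℂ^d. -/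
noncomputable def imPart {d : ℕ} (z : Cd d) : Rd d := WithLp.toLp 2 (fun j => (z j).im)
/-- Canonical embedding ℝ^d → ℂ^d. -/
noncomputable def toCd {d : ℕ} (x : Rd d) : Cd d := WithLp.toLp 2 (fun j => (x j : ℂ))

/-- The open sector `{z = x + iy : |y| < ε (1 + |x|)}` in ℂ^d. -/
def sector (d : ℕ) (ε : ℝ) : Set (Cd d) :=
  {z | ‖imPart z‖ < ε * (1 + ‖rePart z‖)}

/-- The Fourier transform `û(ξ) = ∫ e^{-i y·ξ} u(y) dy`. -/
noncomputable def FT {d : ℕ} (u : Rd d → ℂ) (ξ : Rd d) : ℂ :=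
  ∫ y : Rd d, Complex.exp (-Complex.I * ((inner ℝ y ξ : ℝ) : ℂ)) * u y

/-- The pseudodifferential operator
`p(x,D)u(x) = (2π)^{-d} ∫ e^{i x·ξ} p(x,ξ) û(ξ) dξ`. -/
noncomputable def psiOp {d : ℕ} (p : Rd d → Rd d → ℂ) (u : Rd d → ℂ) : Rd d → ℂ :=
  fun x => (((2 * Real.pi) ^ d : ℝ) : ℂ)⁻¹ *
    ∫ ξ : Rd d, Complex.exp (Complex.I * ((inner ℝ x ξ : ℝ) : ℂ)) * p x ξ * FT u ξ

/-- The mixed derivative `∂_ξ^α ∂_x^β p(x, ξ)` of a symbol. -/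
noncomputable def symbDeriv {d : ℕ} (α β : Fin d → ℕ) (p : Rd d → Rd d → ℂ)
    (x ξ : Rd d) : ℂ :=
  mderiv β (fun x' => mderiv α (fun ξ' => p x' ξ') ξ) x


/-! ### Auxiliary lemmas for `statement2` -/

lemma aux_choose_le_two_pow (n k : ℕ) : n.choose k ≤ 2 ^ n := by
  rcases le_or_gt k n with h | h
  · calc n.choose k ≤ ∑ m ∈ Finset.range (n+1), n.choose m :=
        Finset.single_le_sum (f := fun m => n.choose m) (fun _ _ => Nat.zero_le _)
          (Finset.mem_range.2 (Nat.lt_succ_of_le h))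
    _ = 2 ^ n := Nat.sum_range_choose n
  · simp [Nat.choose_eq_zero_of_lt h]

lemma aux_add_fact_le (m k : ℕ) :
    (m + k).factorial ≤ 2 ^ (m + k) * (m.factorial * k.factorial) := by
  have h := Nat.add_choose_mul_factorial_mul_factorial m k
  calc (m+k).factorial = (m+k).choose k * m.factorial * k.factorial := h.symm
    _ ≤ 2 ^ (m+k) * m.factorial * k.factorial := by
        exact Nat.mul_le_mul_right _ (Nat.mul_le_mul_right _ (aux_choose_le_two_pow _ _))
    _ = 2 ^ (m+k) * (m.factorial * k.factorial) := by ring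

lemma aux_fact_sum_le {ι : Type*} (s : Finset ι) (f : ι → ℕ) :
    (∑ i ∈ s, f i).factorial ≤ (2 ^ s.card) ^ (∑ i ∈ s, f i) * ∏ i ∈ s, (f i).factorial := by
  classical
  induction s using Finset.induction with
  | empty => simp
  | @insert a s ha ih =>
    rw [Finset.sum_insert ha, Finset.prod_insert ha, Finset.card_insert_of_notMem ha]
    set S := ∑ i ∈ s, f i
    calc (f a + S).factorial ≤ 2 ^ (f a + S) * ((f a).factorial * S.factorial) :=
          aux_add_fact_le _ _
      _ ≤ 2 ^ (f a + S) * ((f a).factorial * ((2 ^ s.card) ^ S * ∏ i ∈ s, (f i).factorial)) := by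
          exact Nat.mul_le_mul_left _ (Nat.mul_le_mul_left _ ih)
      _ = 2 ^ (f a + S) * (2 ^ s.card) ^ S * ((f a).factorial * ∏ i ∈ s, (f i).factorial) := by
          ring
      _ ≤ (2 ^ (s.card + 1)) ^ (f a + S) * ((f a).factorial * ∏ i ∈ s, (f i).factorial) := by
          apply Nat.mul_le_mul_right
          rw [← pow_mul, ← pow_mul, ← pow_add]
          apply Nat.pow_le_pow_right (by norm_num)
          nlinarith [Nat.zero_le (f a), Nat.zero_le S, Nat.zero_le s.card]

lemma aux_inf_lemma (a : ℝ) (ha : 0 < a) :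
    ∃ k : ℕ, a ^ k * Real.sqrt (Nat.factorial k) ≤
      2 * Real.exp (-(Real.log 2 / 4) / a ^ 2) := by
  have ha2 : (0:ℝ) < a ^ 2 := by positivity
  rcases le_or_gt (1/4 : ℝ) (a ^ 2) with h | h
  · refine ⟨0, ?_⟩
    simp only [pow_zero, Nat.factorial_zero, Nat.cast_one, Real.sqrt_one, one_mul]
    have h1 : Real.log 2 / 4 / a ^ 2 ≤ Real.log 2 := by
      rw [div_le_iff₀ ha2]
      nlinarith [Real.log_pos (by norm_num : (1:ℝ) < 2)]
    have h3 : Real.exp (-Real.log 2) ≤ Real.exp (-(Real.log 2 / 4) / a ^ 2) := by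
      apply Real.exp_le_exp.2; rw [neg_div]; linarith
    have h2 : Real.exp (-Real.log 2) = 1/2 := by
      rw [Real.exp_neg, Real.exp_log (by norm_num)]; norm_num
    nlinarith
  · set t : ℝ := 1 / (4 * a ^ 2) with ht
    have ht1 : 1 ≤ t := by
      rw [ht, le_div_iff₀ (by linarith)]; linarith
    set k : ℕ := ⌊t⌋₊ with hk
    have hkt : (k:ℝ) ≤ t := Nat.floor_le (by linarith)
    have hkt' : t - 1 ≤ (k:ℝ) := by
      have := Nat.sub_one_lt_floor t; linarith
    refine ⟨k, ?_⟩
    have hsq : Real.sqrt (Nat.factorial k) ≤ Real.sqrt ((k:ℝ) ^ k) := by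
      apply Real.sqrt_le_sqrt
      exact_mod_cast Nat.factorial_le_pow k
    have step1 : a ^ k * Real.sqrt (Nat.factorial k) ≤ (a * Real.sqrt k) ^ k := by
      rw [mul_pow]
      apply mul_le_mul_of_nonneg_left _ (by positivity)
      calc Real.sqrt (Nat.factorial k) ≤ Real.sqrt ((k:ℝ) ^ k) := hsq
        _ = Real.sqrt k ^ k := by
            rw [show ((k:ℝ) ^ k) = Real.sqrt k ^ k * (Real.sqrt k ^ k) by
              rw [← mul_pow, Real.mul_self_sqrt (Nat.cast_nonneg k)]]
            exact Real.sqrt_mul_self (by positivity)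
    have hask : a * Real.sqrt k ≤ 1/2 := by
      have h1 : (a * Real.sqrt k) ^ 2 = a ^ 2 * k := by
        rw [mul_pow, Real.sq_sqrt (by positivity)]
      have h2 : a ^ 2 * (k:ℝ) ≤ 1/4 := by
        calc a ^ 2 * (k:ℝ) ≤ a ^ 2 * t := by nlinarith
          _ = 1/4 := by rw [ht]; field_simp
      nlinarith [mul_nonneg ha.le (Real.sqrt_nonneg (k:ℝ)), Real.sqrt_nonneg (k:ℝ)]
    have step2 : (a * Real.sqrt k) ^ k ≤ (1/2 : ℝ) ^ k :=
      pow_le_pow_left₀ (by positivity) hask k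
    have step3 : ((1/2 : ℝ)) ^ k ≤ 2 * Real.exp (-(Real.log 2 / 4) / a ^ 2) := by
      have e1 : ((1/2:ℝ)) ^ k = Real.exp (-(Real.log 2) * k) := by
        rw [← Real.exp_log (by norm_num : (0:ℝ) < 1/2), ← Real.exp_nat_mul]
        congr 1
        rw [show Real.log (1/2) = -Real.log 2 by
          rw [one_div, Real.log_inv]]
        ring
      have hlog : 0 < Real.log 2 := Real.log_pos (by norm_num)
      have e2 : (Real.log 2 / 4) / a ^ 2 = Real.log 2 * t := by
        rw [ht]; field_simp
      have e3 : -(Real.log 2) * k ≤ Real.log 2 + -(Real.log 2 * t) := by nlinarith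
      calc ((1/2:ℝ)) ^ k = Real.exp (-(Real.log 2) * k) := e1
        _ ≤ Real.exp (Real.log 2 + -(Real.log 2 * t)) := Real.exp_le_exp.2 e3
        _ = 2 * Real.exp (-(Real.log 2 / 4) / a ^ 2) := by
            rw [Real.exp_add, Real.exp_log (by norm_num : (0:ℝ) < 2), neg_div, e2]
    linarith

lemma aux_sqrt_pow (x : ℝ) (hx : 0 ≤ x) (n : ℕ) :
    Real.sqrt (x ^ n) = Real.sqrt x ^ n := by
  rw [show x ^ n = (Real.sqrt x ^ n) * (Real.sqrt x ^ n) by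
    rw [← mul_pow, Real.mul_self_sqrt hx]]
  exact Real.sqrt_mul_self (by positivity)

lemma aux_le_of_mul_le (A B P Q : ℝ) (hP : 0 < P) (hQ : 0 < Q) (h : A * P * Q ≤ B) :
    A ≤ B * P⁻¹ * Q⁻¹ := by
  have h2 : A = A * P * Q * P⁻¹ * Q⁻¹ := by field_simp
  rw [h2]
  have hPi : 0 ≤ P⁻¹ := by positivity
  have hQi : 0 ≤ Q⁻¹ := by positivity
  gcongr

set_option maxHeartbeats 1000000 in
lemma aux_identity (Cv Fm s2 sd sk n r jp E : ℝ) (m k : ℕ)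
    (hn : n ≠ 0) (hr : r ≠ 0) (hsd : sd ≠ 0) :
    ((Cv ^ (2*m+k+1) * Fm * s2^(m+k) * sk) / r^(m+k)) * jp^m * E
    = Cv * Fm * (Cv^2*s2*sd)^m * ((Cv*(s2*sd)/n)^k * sk) * (jp/n)^m * E * (n/(sd*r))^(m+k) := by
  simp only [div_pow, mul_pow]
  field_simp
  ring

lemma jap_pos {d : ℕ} (x : Rd d) : 0 < jap x := by
  unfold jap; positivity

lemma jap_le_sqrt_two_mul {d : ℕ} (x : Rd d) (hx : 1 ≤ ‖x‖) :
    jap x ≤ Real.sqrt 2 * ‖x‖ := by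
  unfold jap
  rw [show Real.sqrt 2 * ‖x‖ = Real.sqrt (2 * ‖x‖^2) by
    rw [Real.sqrt_mul (by norm_num), Real.sqrt_sq (by linarith)]]
  apply Real.sqrt_le_sqrt
  nlinarith

lemma jap_le_sqrt_two {d : ℕ} (x : Rd d) (hx : ‖x‖ ≤ 1) :
    jap x ≤ Real.sqrt 2 := by
  unfold jap
  apply Real.sqrt_le_sqrt
  nlinarith [norm_nonneg x]

lemma aux_norm_sq_eq {d : ℕ} (x : Rd d) : ‖x‖^2 = ∑ i, (x i)^2 := by
  rw [EuclideanSpace.norm_eq, Real.sq_sqrt (by positivity)]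
  simp [Real.norm_eq_abs, sq_abs]

lemma msize_zero {d : ℕ} : msize (fun _ => 0 : Fin d → ℕ) = 0 := by simp [msize]

lemma mpow_zero {d : ℕ} (x : Rd d) : mpow x (fun _ => 0) = 1 := by simp [mpow]

lemma Mab_zero {d : ℕ} (α : Fin d → ℕ) :
    Mab α (fun _ => 0) = (Nat.factorial (msize α) : ℝ) := by
  rw [Mab, msize_zero, Nat.max_zero, Real.mul_self_sqrt (Nat.cast_nonneg _)]

lemma msize_single {d : ℕ} (j : Fin d) (n : ℕ) :
    msize (fun i => if i = j then n else 0) = n := by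
  simp [msize]

lemma mpow_single {d : ℕ} (x : Rd d) (j : Fin d) (n : ℕ) :
    mpow x (fun i => if i = j then n else 0) = (x j) ^ n := by
  rw [mpow]
  rw [Finset.prod_eq_single j (fun i _ hij => by simp [hij]) (by simp)]
  simp

lemma msize_fact_le {d : ℕ} (α : Fin d → ℕ) :
    (Nat.factorial (msize α) : ℝ) ≤ ((2:ℝ) ^ d) ^ (msize α) * (mfact α : ℝ) := by
  have h : (msize α).factorial ≤ (2 ^ d) ^ (msize α) * mfact α := by
    have := aux_fact_sum_le Finset.univ α
    simpa [msize, mfact, Finset.card_univ] using this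
  exact_mod_cast h

set_option maxHeartbeats 4000000 in
/-- The estimates defining `H_sect` imply
`|∂^α f(x)| ≤ C'^{|α|+1} α! ⟨x⟩^{-|α|} e^{-c|x|²}`. -/
theorem statement2 (d : ℕ) (f : Rd d → ℂ) (hf : ContDiff ℝ (⊤ : ℕ∞) f)
    (C : ℝ) (hC : 0 < C)
    (hest : ∀ α β : Fin d → ℕ, ∀ x : Rd d,
      ‖wD α β f x‖ ≤ C ^ (msize α + msize β + 1) * Mab α β) :
    ∃ C' > (0:ℝ), ∃ c > (0:ℝ), ∀ α : Fin d → ℕ, ∀ x : Rd d,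
      ‖mderiv α f x‖ ≤ C' ^ (msize α + 1) * (mfact α) * (jap x ^ msize α)⁻¹ *
        Real.exp (-c * ‖x‖ ^ 2) := by
  classical
  have hlog2 : 0 < Real.log 2 := Real.log_pos (by norm_num)
  set c : ℝ := Real.log 2 / (8 * C ^ 2 * (d + 1)) with hc_def
  have hc : 0 < c := by
    apply div_pos hlog2; positivity
  set C' : ℝ := max (max (2 * C) (C * Real.exp c))
      (max (C * 2 ^ (d + 1)) (2 * C ^ 2 * Real.sqrt d * 2 ^ d)) with hC'_def
  have hC'1 : 2 * C ≤ C' := le_max_of_le_left (le_max_left _ _)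
  have hC'2 : C * Real.exp c ≤ C' := le_max_of_le_left (le_max_right _ _)
  have hC'3 : C * 2 ^ (d + 1) ≤ C' := le_max_of_le_right (le_max_left _ _)
  have hC'4 : 2 * C ^ 2 * Real.sqrt d * 2 ^ d ≤ C' := le_max_of_le_right (le_max_right _ _)
  have hC'pos : 0 < C' := lt_of_lt_of_le (by linarith) hC'1
  refine ⟨C', hC'pos, c, hc, ?_⟩
  intro α x
  set m := msize α with hm
  have hkey : ∀ β : Fin d → ℕ, |mpow x β| * ‖mderiv α f x‖ ≤
      C ^ (m + msize β + 1) * Mab α β := by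
    intro β
    have h := hest α β x
    rwa [wD, norm_mul, Complex.norm_real, Real.norm_eq_abs] at h
  have hjp : 0 < jap x ^ m := pow_pos (jap_pos x) m
  have hexp : 0 < Real.exp (c * ‖x‖ ^ 2) := Real.exp_pos _
  rw [show -c * ‖x‖ ^ 2 = -(c * ‖x‖ ^ 2) by ring, Real.exp_neg]
  apply aux_le_of_mul_le _ _ _ _ hjp hexp
  have hfact : (Nat.factorial m : ℝ) ≤ ((2:ℝ)^d)^m * (mfact α : ℝ) := msize_fact_le α
  have hmf0 : (0:ℝ) ≤ (mfact α : ℝ) := Nat.cast_nonneg _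
  have hs2 : (0:ℝ) < Real.sqrt 2 := Real.sqrt_pos.2 (by norm_num)
  have hs2le : Real.sqrt 2 ≤ 2 := by
    nlinarith [Real.sq_sqrt (by norm_num : (0:ℝ) ≤ 2), Real.sqrt_nonneg 2]
  rcases le_or_gt ‖x‖ 1 with hx | hx
  · -- case ‖x‖ ≤ 1
    have h1 : ‖mderiv α f x‖ ≤ C ^ (m + 1) * (Nat.factorial m : ℝ) := by
      have h := hkey (fun _ => 0)
      rw [mpow_zero, abs_one, one_mul, msize_zero, Mab_zero] at h
      simpa using h
    have hjle : jap x ≤ Real.sqrt 2 := jap_le_sqrt_two x hx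
    have hexple : Real.exp (c * ‖x‖ ^ 2) ≤ Real.exp c := by
      apply Real.exp_le_exp.2
      have hx2 : ‖x‖ ^ 2 ≤ 1 := by nlinarith [norm_nonneg x]
      nlinarith
    calc ‖mderiv α f x‖ * jap x ^ m * Real.exp (c * ‖x‖ ^ 2)
        ≤ (C ^ (m + 1) * (Nat.factorial m : ℝ)) * Real.sqrt 2 ^ m * Real.exp c := by
          have hjm : jap x ^ m ≤ Real.sqrt 2 ^ m := pow_le_pow_left₀ (jap_pos x).le hjle m
          have h1' := mul_le_mul h1 hjm hjp.le (by positivity)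
          exact mul_le_mul h1' hexple (Real.exp_pos _).le (by positivity)
      _ ≤ (C ^ (m + 1) * (((2:ℝ)^d)^m * (mfact α : ℝ))) * Real.sqrt 2 ^ m * Real.exp c := by
          gcongr
      _ = (C * Real.exp c) * (C * 2^d * Real.sqrt 2) ^ m * (mfact α : ℝ) := by ring
      _ ≤ C' * C' ^ m * (mfact α : ℝ) := by
          have hCC : C * 2^d * Real.sqrt 2 ≤ C' := by
            calc C * 2^d * Real.sqrt 2 ≤ C * 2^d * 2 := by
                  have : (0:ℝ) ≤ C * 2^d := by positivity
                  nlinarith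
              _ = C * 2 ^ (d+1) := by ring
              _ ≤ C' := hC'3
          have hin : (C * Real.exp c) * (C * 2^d * Real.sqrt 2) ^ m ≤ C' * C' ^ m :=
            mul_le_mul hC'2 (pow_le_pow_left₀ (by positivity) hCC m) (by positivity) hC'pos.le
          exact mul_le_mul hin (le_refl _) hmf0 (by positivity)
      _ = C' ^ (m + 1) * (mfact α : ℝ) := by ring
  · -- case 1 < ‖x‖
    have hd : 0 < d := by
      by_contra hd0
      push_neg at hd0
      have hd00 : d = 0 := Nat.le_zero.mp hd0
      subst hd00
      have : ‖x‖ = 0 := by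
        rw [EuclideanSpace.norm_eq]; simp
      linarith
    have hx0 : (0:ℝ) < ‖x‖ := by linarith
    obtain ⟨j, -, hj⟩ := Finset.exists_max_image (Finset.univ : Finset (Fin d))
      (fun i => (x i)^2) ⟨⟨0, hd⟩, Finset.mem_univ _⟩
    have hxj : ‖x‖^2 ≤ (d:ℝ) * (x j)^2 := by
      rw [aux_norm_sq_eq]
      calc ∑ i, (x i)^2 ≤ ∑ _i : Fin d, (x j)^2 :=
            Finset.sum_le_sum (fun i _ => hj i (Finset.mem_univ i))
        _ = (d:ℝ) * (x j)^2 := by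
            rw [Finset.sum_const, Finset.card_univ, Fintype.card_fin, nsmul_eq_mul]
    set r := |x j| with hr_def
    have hr2 : r^2 = (x j)^2 := sq_abs _
    have hrpos : (0:ℝ) < r := by
      rcases (abs_nonneg (x j)).eq_or_lt with h0 | h0
      · exfalso; rw [← hr_def] at h0
        have : (x j)^2 = 0 := by rw [← hr2, ← h0]; ring
        nlinarith
      · exact h0
    have hsd : (0:ℝ) < Real.sqrt d := Real.sqrt_pos.2 (by exact_mod_cast hd)
    have hnorm_le : ‖x‖ ≤ Real.sqrt d * r := by
      have h1 : ‖x‖^2 ≤ (Real.sqrt d * r)^2 := by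
        rw [mul_pow, Real.sq_sqrt (Nat.cast_nonneg d), hr2]; exact hxj
      calc ‖x‖ = Real.sqrt (‖x‖^2) := (Real.sqrt_sq (norm_nonneg x)).symm
        _ ≤ Real.sqrt ((Real.sqrt d * r)^2) := Real.sqrt_le_sqrt h1
        _ = Real.sqrt d * r := Real.sqrt_sq (by positivity)
    set a : ℝ := C * (Real.sqrt 2 * Real.sqrt d) / ‖x‖ with ha_def
    have ha : 0 < a := div_pos (mul_pos hC (mul_pos hs2 hsd)) hx0
    obtain ⟨k, hk⟩ := aux_inf_lemma a ha
    rw [neg_div] at hk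
    set X : ℝ := (Real.log 2 / 4) / a ^ 2 with hX_def
    have hX : c * ‖x‖^2 ≤ X := by
      have haa : a^2 = 2*C^2*(d:ℝ)/‖x‖^2 := by
        rw [ha_def, div_pow, mul_pow, mul_pow, Real.sq_sqrt (by norm_num : (0:ℝ) ≤ 2),
          Real.sq_sqrt (Nat.cast_nonneg d)]
        ring
      have hXeq : X = Real.log 2 * ‖x‖^2 / (8*C^2*(d:ℝ)) := by
        rw [hX_def, haa, div_div_eq_mul_div, div_eq_div_iff (by positivity) (by positivity)]
        ring
      rw [hXeq, hc_def]
      have h8 : (0:ℝ) < 8*C^2*(d:ℝ) := by positivity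
      have hdd : 8*C^2*(d:ℝ) ≤ 8*C^2*((d:ℝ)+1) := by nlinarith [sq_nonneg C]
      calc Real.log 2 / (8*C^2*((d:ℝ)+1)) * ‖x‖^2
          ≤ Real.log 2 / (8*C^2*(d:ℝ)) * ‖x‖^2 :=
            mul_le_mul_of_nonneg_right
              (div_le_div_of_nonneg_left hlog2.le h8 hdd) (sq_nonneg _)
        _ = Real.log 2 * ‖x‖^2 / (8*C^2*(d:ℝ)) := by ring
    have h0 := hkey (fun i => if i = j then m + k else 0)
    rw [mpow_single, msize_single, abs_pow, ← hr_def] at h0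
    -- bound Mab
    have hMab : Mab α (fun i => if i = j then m + k else 0) ≤
        Real.sqrt (Nat.factorial m) *
          (Real.sqrt 2 ^ (m+k) * (Real.sqrt (Nat.factorial m) * Real.sqrt (Nat.factorial k))) := by
      rw [Mab, msize_single, ← hm, max_eq_right (Nat.le_add_right m k)]
      gcongr
      calc Real.sqrt (Nat.factorial (m+k))
          ≤ Real.sqrt ((2:ℝ)^(m+k) * ((Nat.factorial m : ℝ) * (Nat.factorial k : ℝ))) := by
            apply Real.sqrt_le_sqrt
            exact_mod_cast aux_add_fact_le m k
        _ = Real.sqrt 2 ^ (m+k) * (Real.sqrt (Nat.factorial m) * Real.sqrt (Nat.factorial k)) := by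
            rw [Real.sqrt_mul (by positivity), Real.sqrt_mul (Nat.cast_nonneg _),
              aux_sqrt_pow 2 (by norm_num)]
    have hrpow : (0:ℝ) < r ^ (m+k) := pow_pos hrpos _
    have hD : ‖mderiv α f x‖ ≤
        (C ^ (2*m+k+1) * (Nat.factorial m : ℝ) * Real.sqrt 2 ^ (m+k) *
          Real.sqrt (Nat.factorial k)) / r ^ (m+k) := by
      rw [le_div_iff₀ hrpow]
      calc ‖mderiv α f x‖ * r ^ (m+k) = r ^ (m+k) * ‖mderiv α f x‖ := by ring
        _ ≤ C ^ (m + (m+k) + 1) * Mab α (fun i => if i = j then m + k else 0) := h0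
        _ ≤ C ^ (m + (m+k) + 1) * (Real.sqrt (Nat.factorial m) *
              (Real.sqrt 2 ^ (m+k) * (Real.sqrt (Nat.factorial m) * Real.sqrt (Nat.factorial k)))) := by
            gcongr
        _ = C ^ (2*m+k+1) * (Real.sqrt (Nat.factorial m) * Real.sqrt (Nat.factorial m)) *
              Real.sqrt 2 ^ (m+k) * Real.sqrt (Nat.factorial k) := by
            rw [show m + (m+k) + 1 = 2*m+k+1 by ring]; ring
        _ = C ^ (2*m+k+1) * (Nat.factorial m : ℝ) * Real.sqrt 2 ^ (m+k) *
              Real.sqrt (Nat.factorial k) := by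
            rw [Real.mul_self_sqrt (Nat.cast_nonneg _)]
    have hsk0 : (0:ℝ) ≤ Real.sqrt (Nat.factorial k) := Real.sqrt_nonneg _
    calc ‖mderiv α f x‖ * jap x ^ m * Real.exp (c * ‖x‖ ^ 2)
        ≤ ((C ^ (2*m+k+1) * (Nat.factorial m : ℝ) * Real.sqrt 2 ^ (m+k) *
            Real.sqrt (Nat.factorial k)) / r ^ (m+k)) * jap x ^ m * Real.exp (c * ‖x‖ ^ 2) := by
          gcongr
      _ = C * (Nat.factorial m : ℝ) * (C^2 * Real.sqrt 2 * Real.sqrt d) ^ m *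
            (a ^ k * Real.sqrt (Nat.factorial k)) * (jap x / ‖x‖) ^ m *
            Real.exp (c * ‖x‖ ^ 2) * (‖x‖ / (Real.sqrt d * r)) ^ (m+k) := by
          rw [ha_def]
          exact aux_identity C (Nat.factorial m) (Real.sqrt 2) (Real.sqrt d)
            (Real.sqrt (Nat.factorial k)) ‖x‖ r (jap x) (Real.exp (c * ‖x‖ ^ 2)) m k
            hx0.ne' hrpos.ne' hsd.ne'
      _ ≤ C * (Nat.factorial m : ℝ) * (C^2 * Real.sqrt 2 * Real.sqrt d) ^ m *
            (2 * Real.exp (-X)) * (jap x / ‖x‖) ^ m *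
            Real.exp (c * ‖x‖ ^ 2) * (‖x‖ / (Real.sqrt d * r)) ^ (m+k) := by
          have hjn : (0:ℝ) ≤ jap x / ‖x‖ := div_nonneg (jap_pos x).le hx0.le
          have hJ0 : (0:ℝ) ≤ (jap x / ‖x‖) ^ m := pow_nonneg hjn m
          have hE0 : (0:ℝ) ≤ Real.exp (c * ‖x‖ ^ 2) := (Real.exp_pos _).le
          have hR0 : (0:ℝ) ≤ (‖x‖ / (Real.sqrt d * r)) ^ (m+k) :=
            pow_nonneg (div_nonneg hx0.le (mul_pos hsd hrpos).le) _
          have hQ : (0:ℝ) ≤ C * (Nat.factorial m : ℝ) * (C^2 * Real.sqrt 2 * Real.sqrt d) ^ m := by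
            positivity
          exact mul_le_mul_of_nonneg_right (mul_le_mul_of_nonneg_right
            (mul_le_mul_of_nonneg_right (mul_le_mul_of_nonneg_left hk hQ) hJ0) hE0) hR0
      _ ≤ C * (Nat.factorial m : ℝ) * (C^2 * Real.sqrt 2 * Real.sqrt d) ^ m *
            (2 * Real.exp (-X)) * (Real.sqrt 2) ^ m *
            Real.exp (c * ‖x‖ ^ 2) * (‖x‖ / (Real.sqrt d * r)) ^ (m+k) := by
          have hjn : (0:ℝ) ≤ jap x / ‖x‖ := div_nonneg (jap_pos x).le hx0.le
          have hE0 : (0:ℝ) ≤ Real.exp (c * ‖x‖ ^ 2) := (Real.exp_pos _).le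
          have hR0 : (0:ℝ) ≤ (‖x‖ / (Real.sqrt d * r)) ^ (m+k) :=
            pow_nonneg (div_nonneg hx0.le (mul_pos hsd hrpos).le) _
          have hQ2 : (0:ℝ) ≤ C * (Nat.factorial m : ℝ) * (C^2 * Real.sqrt 2 * Real.sqrt d) ^ m *
              (2 * Real.exp (-X)) := by positivity
          have hJle : (jap x / ‖x‖) ^ m ≤ Real.sqrt 2 ^ m := by
            apply pow_le_pow_left₀ hjn
            rw [div_le_iff₀ hx0]
            exact jap_le_sqrt_two_mul x hx.le
          exact mul_le_mul_of_nonneg_right (mul_le_mul_of_nonneg_right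
            (mul_le_mul_of_nonneg_left hJle hQ2) hE0) hR0
      _ ≤ C * (Nat.factorial m : ℝ) * (C^2 * Real.sqrt 2 * Real.sqrt d) ^ m *
            (2 * Real.exp (-X)) * (Real.sqrt 2) ^ m *
            Real.exp (c * ‖x‖ ^ 2) * 1 := by
          have hQ3 : (0:ℝ) ≤ C * (Nat.factorial m : ℝ) * (C^2 * Real.sqrt 2 * Real.sqrt d) ^ m *
              (2 * Real.exp (-X)) * (Real.sqrt 2) ^ m * Real.exp (c * ‖x‖ ^ 2) := by positivity
          have hR1 : (‖x‖ / (Real.sqrt d * r)) ^ (m+k) ≤ 1 := by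
            apply pow_le_one₀ (div_nonneg hx0.le (mul_pos hsd hrpos).le)
            rw [div_le_one (mul_pos hsd hrpos)]
            exact hnorm_le
          exact mul_le_mul_of_nonneg_left hR1 hQ3
      _ = 2 * C * (Nat.factorial m : ℝ) * ((C^2 * Real.sqrt 2 * Real.sqrt d) * Real.sqrt 2) ^ m *
            (Real.exp (-X) * Real.exp (c * ‖x‖ ^ 2)) := by
          rw [mul_pow]
          ring
      _ ≤ 2 * C * (Nat.factorial m : ℝ) * (2 * C^2 * Real.sqrt d) ^ m * 1 := by
          have he : Real.exp (-X) * Real.exp (c * ‖x‖ ^ 2) ≤ 1 := by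
            rw [← Real.exp_add, Real.exp_le_one_iff]
            linarith
          have h22 : Real.sqrt 2 * Real.sqrt 2 = 2 := Real.mul_self_sqrt (by norm_num)
          have hpow : ((C^2 * Real.sqrt 2 * Real.sqrt d) * Real.sqrt 2) ^ m =
              (2 * C^2 * Real.sqrt d) ^ m := by
            rw [show (C^2 * Real.sqrt 2 * Real.sqrt d) * Real.sqrt 2 = 2 * C^2 * Real.sqrt d by
              linear_combination C^2 * Real.sqrt d * h22]
          rw [hpow]
          exact mul_le_mul_of_nonneg_left he (by positivity)
      _ ≤ 2 * C * (((2:ℝ)^d)^m * (mfact α : ℝ)) * (2 * C^2 * Real.sqrt d) ^ m * 1 := by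
          gcongr
      _ = (2 * C) * ((2 * C^2 * Real.sqrt d * 2^d) ^ m) * (mfact α : ℝ) := by
          rw [mul_pow]
          ring
      _ ≤ C' * C' ^ m * (mfact α : ℝ) := by
          have hin : (2*C) * ((2 * C^2 * Real.sqrt d * 2^d) ^ m) ≤ C' * C' ^ m :=
            mul_le_mul hC'1 (pow_le_pow_left₀ (by positivity) hC'4 m) (by positivity) hC'pos.le
          exact mul_le_mul hin (le_refl _) hmf0 (by positivity)
      _ = C' ^ (m + 1) * (mfact α : ℝ) := by ring
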